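/- arXiv:2407.11248 — 2 statements merged into one kernel-verified Lean document; each statement's English description precedes it below -/
import Mathlib

section
/- Let f : ℝ^n → ℝ^n be C^1, let S ⊆ ℝ^n be a linear subspace of dimension n - d with orthonormal basis u_1, ..., u_d of its orthogonal complement S^⊥. Suppose at a point x* the Jacobian J = Df(x*) satisfies ker(J) ∩ S = {0} and the rows f_{d+1}, ..., f_n of f span the row space of f in the sense that each row of J indexed by 1,...,d is a fixed linear combination of the rows indexed by d+1,...,n. Define the reduced Jacobian matrix J̃ as the n×n matrix whose first d rows are u_1^T, ..., u_d^T and whose last n-d rows are the gradients ∇f_{d+1}(x*), ..., ∇f_n(x*). Then det(J̃) ≠ 0. -/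
/-- Lemma 4.3: the reduced Jacobian matrix is nonsingular. -/
theorem stmt_2 (d m : ℕ)
    (f : EuclideanSpace ℝ (Fin (d + m)) → EuclideanSpace ℝ (Fin (d + m)))
    (hf : ContDiff ℝ 1 f)
    (x : EuclideanSpace ℝ (Fin (d + m)))
    (S : Submodule ℝ (EuclideanSpace ℝ (Fin (d + m))))
    (hS : Module.finrank ℝ S = m)
    (u : Fin d → EuclideanSpace ℝ (Fin (d + m)))
    (hu : Orthonormal ℝ u)
    (hspan : Submodule.span ℝ (Set.range u) = Sᗮ)
    (J : Matrix (Fin (d + m)) (Fin (d + m)) ℝ)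
    (hJ : ∀ i j, J i j = fderiv ℝ f x (EuclideanSpace.single j 1) i)
    -- each of the first d rows of J is a linear combination of the last m rows
    (hrows : ∀ i : Fin d, ∃ a : Fin m → ℝ,
      ∀ j, J (Fin.castAdd m i) j = ∑ l : Fin m, a l * J (Fin.natAdd d l) j)
    -- ker(J) ∩ S = {0}
    (hker : ∀ v : EuclideanSpace ℝ (Fin (d + m)), v ∈ S →
      J.mulVec (fun j => v j) = 0 → v = 0) :
    (Matrix.of fun i j =>
      Fin.addCases (motive := fun _ => ℝ) (fun i₀ => u i₀ j)
        (fun i₁ => J (Fin.natAdd d i₁) j) i :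
      Matrix (Fin (d + m)) (Fin (d + m)) ℝ).det ≠ 0 := by
  rw [Ne, ← Matrix.exists_mulVec_eq_zero_iff]
  rintro ⟨v, hv0, hv⟩
  set w : EuclideanSpace ℝ (Fin (d + m)) := WithLp.toLp 2 v with hw
  have hrow : ∀ i, ∑ j, (Fin.addCases (motive := fun _ => ℝ) (fun i₀ => u i₀ j)
      (fun i₁ => J (Fin.natAdd d i₁) j) i) * v j = 0 := by
    intro i
    have := congrFun hv i
    simpa [Matrix.mulVec, dotProduct] using this
  have hleft : ∀ i₀ : Fin d, ∑ j, u i₀ j * v j = 0 := by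
    intro i₀
    have := hrow (Fin.castAdd m i₀)
    simpa using this
  have hright : ∀ l : Fin m, ∑ j, J (Fin.natAdd d l) j * v j = 0 := by
    intro l
    have := hrow (Fin.natAdd d l)
    simpa using this
  have hwS : w ∈ S := by
    rw [← Submodule.orthogonal_orthogonal S, ← hspan, Submodule.mem_orthogonal]
    intro y hy
    induction hy using Submodule.span_induction with
    | mem y hy =>
      obtain ⟨i₀, rfl⟩ := hy
      simpa [PiLp.inner_apply, RCLike.inner_apply, hw, mul_comm] using hleft i₀
    | zero => simp
    | add y z _ _ hy hz => rw [inner_add_left, hy, hz, add_zero]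
    | smul c y _ hy => rw [inner_smul_left, hy, mul_zero]
  have hJv : J.mulVec (fun j => w j) = 0 := by
    funext i
    refine Fin.addCases (fun i₀ => ?_) (fun l => ?_) i
    · obtain ⟨a, ha⟩ := hrows i₀
      have : ∑ j, J (Fin.castAdd m i₀) j * v j = 0 := by
        simp_rw [ha, Finset.sum_mul]
        rw [Finset.sum_comm]
        simp_rw [mul_assoc, ← Finset.mul_sum]
        simp [hright]
      simpa [Matrix.mulVec, dotProduct, hw] using this
    · simpa [Matrix.mulVec, dotProduct, hw] using hright l
  exact hv0 (by simpa [hw] using congrArg WithLp.ofLp (hker w hwS hJv))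
end

section
/- Let k₁, ..., k_q > 0 and x* ∈ ℝ_{>0}^n, and let y₁, ..., y_q ∈ ℤ_{≥0}^n be the vertices of a cycle y₁ → y₂ → ... → y_q → y₁ satisfying the complex-balanced condition k₁(x*)^{y₁} = k₂(x*)^{y₂} = ... = k_q(x*)^{y_q}. Define f̃₁(x) = ∑_{i=1}^q k_i x^{y_i} Δ_i where Δ_i = y_{i+1,1} - y_{i,1} (cyclically). Then f̃₁(x*) = 0 and ∂f̃₁/∂x₁(x*) = (k₁(x*)^{y₁}/x₁*) · ∑_{i=1}^q Δ_i y_{i,1} ≤ 0, with equality if and only if y_{1,1} = y_{2,1} = ... = y_{q,1}. -/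
open Finset

theorem stmt_14 (n q : ℕ) (i₀ : Fin (q + 1))
    (k : Fin (q + 1) → ℝ) (hk : ∀ i, 0 < k i)
    (xs : Fin n → ℝ) (hxs : ∀ j, 0 < xs j) (hn : 0 < n)
    (y : Fin (q + 1) → Fin n → ℕ)
    -- complex-balanced condition along the cycle
    (hcb : ∀ i j : Fin (q + 1),
      k i * ∏ l, xs l ^ y i l = k j * ∏ l, xs l ^ y j l)
    (f : (Fin n → ℝ) → ℝ)
    (hf : ∀ x, f x = ∑ i : Fin (q + 1),
      k i * (∏ l, x l ^ y i l) * ((y (i + 1) ⟨0, hn⟩ : ℝ) - (y i ⟨0, hn⟩ : ℝ))) :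
    f xs = 0 ∧
    fderiv ℝ f xs (Pi.single ⟨0, hn⟩ 1)
      = (k i₀ * ∏ l, xs l ^ y i₀ l) / xs ⟨0, hn⟩ *
        ∑ i : Fin (q + 1),
          ((y (i + 1) ⟨0, hn⟩ : ℝ) - (y i ⟨0, hn⟩ : ℝ)) * (y i ⟨0, hn⟩ : ℝ) ∧
    fderiv ℝ f xs (Pi.single ⟨0, hn⟩ 1) ≤ 0 ∧
    (fderiv ℝ f xs (Pi.single ⟨0, hn⟩ 1) = 0 ↔
      ∀ i j : Fin (q + 1), y i ⟨0, hn⟩ = y j ⟨0, hn⟩) := by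
  set z : Fin n := ⟨0, hn⟩ with hzdef
  have hfe : f = fun x => ∑ i : Fin (q + 1),
      k i * (∏ l, x l ^ y i l) * ((y (i + 1) z : ℝ) - (y i z : ℝ)) := funext hf
  set c : ℝ := k i₀ * ∏ l, xs l ^ y i₀ l with hcdef
  have hcpos : 0 < c := by
    have := hk i₀
    have : 0 < ∏ l, xs l ^ y i₀ l := Finset.prod_pos fun l _ => pow_pos (hxs l) _
    positivity
  have hP : ∀ i, k i * ∏ l, xs l ^ y i l = c := fun i => hcb i i₀
  have hzpos : 0 < xs z := hxs z
  -- telescoping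
  have htel : ∀ g : Fin (q + 1) → ℝ, ∑ i, g (i + 1) = ∑ i, g i := by
    intro g
    rw [← Equiv.sum_comp (Equiv.addRight (1 : Fin (q + 1))) g]
    rfl
  set S : ℝ := ∑ i : Fin (q + 1), ((y (i + 1) z : ℝ) - (y i z : ℝ)) * (y i z : ℝ) with hSdef
  set T : ℝ := ∑ i : Fin (q + 1), ((y (i + 1) z : ℝ) - (y i z : ℝ)) ^ 2 with hTdef
  have hTS : T + 2 * S = 0 := by
    have h2 : ∑ i : Fin (q + 1), ((y (i + 1) z : ℝ)) ^ 2 = ∑ i, ((y i z : ℝ)) ^ 2 :=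
      htel fun i => ((y i z : ℝ)) ^ 2
    have h3 : ∀ i : Fin (q + 1),
        ((y (i + 1) z : ℝ) - y i z) ^ 2 + 2 * (((y (i + 1) z : ℝ) - y i z) * y i z)
          = ((y (i + 1) z : ℝ)) ^ 2 - ((y i z : ℝ)) ^ 2 := fun i => by ring
    rw [hTdef, hSdef, Finset.mul_sum, ← Finset.sum_add_distrib]
    simp_rw [h3, Finset.sum_sub_distrib, h2, sub_self]
  have hTnn : 0 ≤ T := Finset.sum_nonneg fun i _ => sq_nonneg _
  have hSval : S = -T / 2 := by linarith
  -- part 1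
  have h0 : f xs = 0 := by
    rw [hfe]
    have h4 : ∀ i : Fin (q + 1),
        k i * (∏ l, xs l ^ y i l) * ((y (i + 1) z : ℝ) - (y i z : ℝ))
          = c * (y (i + 1) z : ℝ) - c * (y i z : ℝ) := by
      intro i
      rw [show k i * (∏ l, xs l ^ y i l) * ((y (i + 1) z : ℝ) - (y i z : ℝ))
          = (k i * ∏ l, xs l ^ y i l) * ((y (i + 1) z : ℝ) - (y i z : ℝ)) from rfl, hP i]
      ring
    simp_rw [h4, Finset.sum_sub_distrib]
    rw [show (∑ i : Fin (q+1), c * (y (i + 1) z : ℝ)) = ∑ i : Fin (q+1), c * (y i z : ℝ) from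
      htel fun i => c * (y i z : ℝ), sub_self]
  -- derivative
  have hFi : ∀ i : Fin (q + 1), HasFDerivAt (fun x : Fin n → ℝ => ∏ l, x l ^ y i l)
      (∑ l, (∏ m ∈ Finset.univ.erase l, xs m ^ y i m) •
        (((y i l : ℝ) * xs l ^ (y i l - 1)) •
          ContinuousLinearMap.proj (R := ℝ) (φ := fun _ : Fin n => ℝ) l)) xs := fun i =>
    HasFDerivAt.finset_prod fun l _ =>
      (hasDerivAt_pow (y i l) (xs l)).comp_hasFDerivAt xs
        ((ContinuousLinearMap.proj (R := ℝ) (φ := fun _ : Fin n => ℝ) l).hasFDerivAt)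
  have hL : HasFDerivAt f
      (∑ i : Fin (q + 1), ((y (i + 1) z : ℝ) - (y i z : ℝ)) • ((k i) •
        (∑ l, (∏ m ∈ Finset.univ.erase l, xs m ^ y i m) •
          (((y i l : ℝ) * xs l ^ (y i l - 1)) •
            ContinuousLinearMap.proj (R := ℝ) (φ := fun _ : Fin n => ℝ) l)))) xs := by
    rw [hfe]
    exact HasFDerivAt.fun_sum fun i _ => (((hFi i).const_mul (k i)).mul_const _)
  have hfd := hL.fderiv
  -- monomial derivative value
  have hmono : ∀ i : Fin (q + 1),
      (∏ m ∈ Finset.univ.erase z, xs m ^ y i m) * ((y i z : ℝ) * xs z ^ (y i z - 1))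
        = (y i z : ℝ) / xs z * ∏ l, xs l ^ y i l := by
    intro i
    rw [← Finset.mul_prod_erase Finset.univ (fun l => xs l ^ y i l) (Finset.mem_univ z)]
    rcases Nat.eq_zero_or_pos (y i z) with h | h
    · simp [h]
    · obtain ⟨m, hm⟩ := Nat.exists_eq_succ_of_ne_zero h.ne'
      rw [hm]
      simp only [Nat.succ_eq_add_one, Nat.add_sub_cancel, pow_succ]
      field_simp
  have hval : fderiv ℝ f xs (Pi.single z 1) = c / xs z * S := by
    rw [hfd]
    simp only [ContinuousLinearMap.sum_apply, ContinuousLinearMap.smul_apply,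
      ContinuousLinearMap.proj_apply, smul_eq_mul]
    have hin : ∀ i : Fin (q + 1),
        (∑ l, (∏ m ∈ Finset.univ.erase l, xs m ^ y i m) *
          (((y i l : ℝ) * xs l ^ (y i l - 1)) * (Pi.single (M := fun _ : Fin n => ℝ) z 1 l)))
          = (y i z : ℝ) / xs z * ∏ l, xs l ^ y i l := by
      intro i
      rw [Finset.sum_eq_single_of_mem z (Finset.mem_univ z)]
      · rw [Pi.single_eq_same, mul_one, hmono i]
      · intro l _ hl
        rw [Pi.single_eq_of_ne hl]
        ring
    simp_rw [hin]
    rw [hSdef, Finset.mul_sum]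
    refine Finset.sum_congr rfl fun i _ => ?_
    rw [show ((y (i+1) z : ℝ) - y i z) * (k i * ((y i z : ℝ) / xs z * ∏ l, xs l ^ y i l))
        = (k i * ∏ l, xs l ^ y i l) * (((y (i+1) z : ℝ) - y i z) * (y i z : ℝ)) / xs z by ring,
      hP i]
    ring
  have hcx : 0 < c / xs z := div_pos hcpos hzpos
  refine ⟨h0, hval, ?_, ?_⟩
  · rw [hval]
    exact mul_nonpos_of_nonneg_of_nonpos hcx.le (by linarith)
  · rw [hval]
    constructor
    · intro hDz
      have hS0 : S = 0 := by
        rcases mul_eq_zero.mp hDz with h | h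
        · exact absurd h hcx.ne'
        · exact h
      have hT0 : T = 0 := by linarith
      have hcons : ∀ i : Fin (q + 1), y (i + 1) z = y i z := by
        intro i
        have := (Finset.sum_eq_zero_iff_of_nonneg (fun i _ => sq_nonneg _)).mp hT0 i
          (Finset.mem_univ i)
        have h5 : (y (i + 1) z : ℝ) = (y i z : ℝ) := by
          have := pow_eq_zero_iff (n := 2) (by norm_num) |>.mp this
          linarith [sub_eq_zero.mp this]
        exact_mod_cast h5
      open Fin.NatCast in
      have hzero : ∀ m : ℕ, y ((m : Fin (q + 1))) z = y 0 z := by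
        intro m
        induction m with
        | zero => norm_num
        | succ m ih =>
          rw [show ((m + 1 : ℕ) : Fin (q + 1)) = ((m : ℕ) : Fin (q + 1)) + 1 by push_cast; ring,
            hcons, ih]
      intro i j
      open Fin.NatCast in
      rw [← Fin.cast_val_eq_self i, ← Fin.cast_val_eq_self j, hzero, hzero]
    · intro hall
      have : S = 0 := by
        rw [hSdef]
        refine Finset.sum_eq_zero fun i _ => ?_
        rw [hall (i + 1) i]
        ring
      rw [this, mul_zero]
end
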